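/- For a subspace lattice 𝔏 in a complex Banach space X, a rank-one operator e⊗η (given by x ↦ η(x)e) belongs to Alg(𝔏) if and only if there exists a subspace M ∈ 𝔏 such that e ∈ M and η annihilates M₋, where M₋ = ⋁{K ∈ 𝔏 : M ⊄ K}. -/

import Mathlib

open ContinuousLinearMap

/-- The closed linear span (join) of a family of subspaces. -/
noncomputable def cJoin {X : Type*} [NormedAddCommGroup X] [NormedSpace ℂ X]
    (S : Set (Submodule ℂ X)) : Submodule ℂ X :=
  (sSup S).topologicalClosure

/-- Join of two subspaces in the lattice of closed subspaces. -/
noncomputable def cJoin2 {X : Type*} [NormedAddCommGroup X] [NormedSpace ℂ X]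
    (M N : Submodule ℂ X) : Submodule ℂ X :=
  (M ⊔ N).topologicalClosure

/-- A subspace lattice: a complete lattice of closed subspaces containing the trivial ones. -/
def IsSubspaceLattice {X : Type*} [NormedAddCommGroup X] [NormedSpace ℂ X]
    (L : Set (Submodule ℂ X)) : Prop :=
  (∀ M ∈ L, IsClosed (M : Set X)) ∧ ⊥ ∈ L ∧ ⊤ ∈ L ∧
    ∀ S ⊆ L, cJoin S ∈ L ∧ sInf S ∈ L

/-- Alg(F): bounded operators leaving every member of F invariant. -/
def algOf {X : Type*} [NormedAddCommGroup X] [NormedSpace ℂ X]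
    (L : Set (Submodule ℂ X)) : Set (X →L[ℂ] X) :=
  {A | ∀ M ∈ L, ∀ x ∈ M, A x ∈ M}

/-- Lat(T): closed subspaces invariant under every operator in T. -/
def latOf {X : Type*} [NormedAddCommGroup X] [NormedSpace ℂ X]
    (T : Set (X →L[ℂ] X)) : Set (Submodule ℂ X) :=
  {M | IsClosed (M : Set X) ∧ ∀ A ∈ T, ∀ x ∈ M, A x ∈ M}

/-- The rank-one operator e ⊗ η : x ↦ η(x) • e. -/
noncomputable def rankOne {X : Type*} [NormedAddCommGroup X] [NormedSpace ℂ X]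
    (e : X) (η : X →L[ℂ] ℂ) : X →L[ℂ] X :=
  η.smulRight e

/-- The rank-one operators in a set of operators. -/
noncomputable def Rk1 {X : Type*} [NormedAddCommGroup X] [NormedSpace ℂ X]
    (T : Set (X →L[ℂ] X)) : Set (X →L[ℂ] X) :=
  {A ∈ T | ∃ (e : X) (η : X →L[ℂ] ℂ), e ≠ 0 ∧ η ≠ 0 ∧ A = rankOne e η}

/-- M₋ = ⋁{K ∈ L : M ⊄ K}. -/
noncomputable def mMinus {X : Type*} [NormedAddCommGroup X] [NormedSpace ℂ X]
    (L : Set (Submodule ℂ X)) (M : Submodule ℂ X) : Submodule ℂ X :=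
  cJoin {K | K ∈ L ∧ ¬ M ≤ K}

/-- M₊ = ⋀{K ∈ L : K ⊄ M}. -/
noncomputable def mPlus {X : Type*} [NormedAddCommGroup X] [NormedSpace ℂ X]
    (L : Set (Submodule ℂ X)) (M : Submodule ℂ X) : Submodule ℂ X :=
  sInf {K | K ∈ L ∧ ¬ K ≤ M}

/-- N_* = ⋀{M₋ : M ∈ L, M ⊄ N}. -/
noncomputable def nStar {X : Type*} [NormedAddCommGroup X] [NormedSpace ℂ X]
    (L : Set (Submodule ℂ X)) (N : Submodule ℂ X) : Submodule ℂ X :=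
  sInf {P | ∃ M, M ∈ L ∧ ¬ M ≤ N ∧ P = mMinus L M}

/-- The cyclic subspace [Alg(L)x]: closed linear span of the orbit of x under Alg(L). -/
noncomputable def cyclicSubspace {X : Type*} [NormedAddCommGroup X] [NormedSpace ℂ X]
    (L : Set (Submodule ℂ X)) (x : X) : Submodule ℂ X :=
  (Submodule.span ℂ ((fun A : X →L[ℂ] X => A x) '' algOf L)).topologicalClosure

/-- The pinch points of a family of subspaces. -/
def pinOf {X : Type*} [NormedAddCommGroup X] [NormedSpace ℂ X]
    (L : Set (Submodule ℂ X)) : Set (Submodule ℂ X) :=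
  {P | P ∈ L ∧ ∀ M ∈ L, M ≤ P ∨ P ≤ M}


/-- Ringrose's Lemma: a rank-one operator e⊗η belongs to Alg(𝔏) iff there is M ∈ 𝔏
with e ∈ M and η annihilating M₋. -/
theorem ringrose_lemma {X : Type*} [NormedAddCommGroup X] [NormedSpace ℂ X] [CompleteSpace X]
    (L : Set (Submodule ℂ X)) (hL : IsSubspaceLattice L)
    (e : X) (η : X →L[ℂ] ℂ) (he : e ≠ 0) (hη : η ≠ 0) :
    rankOne e η ∈ algOf L ↔ ∃ M ∈ L, e ∈ M ∧ ∀ x ∈ mMinus L M, η x = 0 := by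
  constructor
  · intro hA
    refine ⟨sInf {K | K ∈ L ∧ e ∈ K}, ?_, ?_, ?_⟩
    · exact (hL.2.2.2 _ (fun K hK => hK.1)).2
    · exact Submodule.mem_sInf.2 fun K hK => hK.2
    · intro x hx
      have hker : mMinus L (sInf {K | K ∈ L ∧ e ∈ K}) ≤ LinearMap.ker (η : X →ₗ[ℂ] ℂ) := by
        apply Submodule.topologicalClosure_minimal
        · apply sSup_le
          intro K hK y hy
          rw [LinearMap.mem_ker]
          by_contra hηy
          have h1 : rankOne e η y ∈ K := hA K hK.1 y hy
          have h2 : (η y) • e ∈ K := by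
            simpa [rankOne, ContinuousLinearMap.smulRight_apply] using h1
          have he' : e ∈ K := by
            have := K.smul_mem (η y)⁻¹ h2
            rwa [smul_smul, inv_mul_cancel₀ (show η y ≠ 0 from hηy), one_smul] at this
          exact hK.2 (sInf_le ⟨hK.1, he'⟩)
        · exact ContinuousLinearMap.isClosed_ker η
      exact hker hx
  · rintro ⟨M, hM, heM, hann⟩
    intro K hK x hx
    have : rankOne e η x = η x • e := by
      simp [rankOne, ContinuousLinearMap.smulRight_apply]
    rw [this]
    by_cases hMK : M ≤ K
    · exact K.smul_mem _ (hMK heM)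
    · have hxm : x ∈ mMinus L M :=
        Submodule.le_topologicalClosure _ ((le_sSup (show K ∈ {K | K ∈ L ∧ ¬ M ≤ K} from ⟨hK, hMK⟩)) hx)
      rw [hann x hxm, zero_smul]
      exact K.zero_mem
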